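/- arXiv:1704.05998 — 2 statements merged into one kernel-verified Lean document; each statement's English description precedes it below -/
import Mathlib

section
/- Equivalently to the comparison of success probabilities for a uniformly distributed parameter: let n ≥ 1, let R be an n×n real upper triangular matrix with positive diagonal entries r_11,…,r_nn, let σ > 0, and let B = {x ∈ ℤⁿ : ℓ ≤ x ≤ u} with ℓ, u ∈ ℤⁿ and ℓ_i < u_i for all i. For x̄ ∈ B define J(x̄) = det(R)/(2πσ²)^{n/2} · ∫_{I_1(x̄_1)×⋯×I_n(x̄_n)} exp(−‖Rξ‖²/(2σ²)) dξ, where I_i(x̄_i) = (−∞, 1/2] if x̄_i = ℓ_i, I_i(x̄_i) = [−1/2, 1/2] if ℓ_i < x̄_i < u_i, and I_i(x̄_i) = [−1/2, ∞) if x̄_i = u_i. Then (1/∏_{i=1}^n (u_i − ℓ_i + 1)) ∑_{x̄ ∈ B} J(x̄) ≤ ∏_{i=1}^n [ 1/(u_i − ℓ_i + 1) + ((u_i − ℓ_i)/(u_i − ℓ_i + 1)) · φ_σ(r_ii) ]. -/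
open MeasureTheory ProbabilityTheory Matrix
open scoped ENNReal NNReal

/-- Nearest integer rounding, with ties broken toward the integer of smaller magnitude. -/
noncomputable def nround (x : ℝ) : ℤ :=
  if 0 ≤ x then ⌈x - 1 / 2⌉ else ⌊x + 1 / 2⌋

/-- Clamp the nearest integer of `c` to the interval `[a, b]`:
`a` if `⌊c⌉ ≤ a`, `b` if `⌊c⌉ ≥ b`, and `⌊c⌉` otherwise. -/
noncomputable def clampInt (a b : ℤ) (c : ℝ) : ℤ :=
  if nround c ≤ a then a
  else if b ≤ nround c then b
  else nround c

/-- The box-constrained rounding detector computed from `d`. -/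
noncomputable def roundDetector {n : ℕ} (l u : Fin n → ℤ) (d : Fin n → ℝ) : Fin n → ℤ :=
  fun i => clampInt (l i) (u i) (d i)

/-- Auxiliary recursion for the box-constrained Babai detector: `babaiAux R l u y k`
has the correct Babai values at indices `i` with `i + k ≥ n` (computed from the last
index downwards). -/
noncomputable def babaiAux {n : ℕ} (R : Matrix (Fin n) (Fin n) ℝ) (l u : Fin n → ℤ)
    (y : Fin n → ℝ) : ℕ → Fin n → ℤ
  | 0 => fun _ => 0
  | k + 1 => fun i =>
      if i.val + (k + 1) = n then
        clampInt (l i) (u i)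
          ((y i - ∑ j : Fin n, if i < j then R i j * (babaiAux R l u y k j : ℝ) else 0) / R i i)
      else babaiAux R l u y k i

/-- The box-constrained Babai detector computed from `y`, for upper triangular `R`:
for `i = n, …, 1`, `c_i = (y_i - ∑_{j>i} r_{ij} x_j^BB)/r_{ii}` and `x_i^BB` is `⌊c_i⌉`
clamped to `[l_i, u_i]`. -/
noncomputable def babaiDetector {n : ℕ} (R : Matrix (Fin n) (Fin n) ℝ) (l u : Fin n → ℤ)
    (y : Fin n → ℝ) : Fin n → ℤ :=
  babaiAux R l u y n

/-- `phi σ ζ = (2/√(2π)) ∫_0^{ζ/(2σ)} exp(-t²/2) dt`. -/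
noncomputable def phi (σ ζ : ℝ) : ℝ :=
  2 / Real.sqrt (2 * Real.pi) * ∫ t in (0:ℝ)..(ζ / (2 * σ)), Real.exp (-(t ^ 2) / 2)


open intervalIntegral
open scoped Real
set_option maxHeartbeats 1000000

lemma expInt (b c : ℝ) : IntervalIntegrable (fun x => Real.exp (-b * (x + c)^2)) volume a a' := by
  apply Continuous.intervalIntegrable
  continuity

lemma shift_le_aux (b : ℝ) (hb : 0 < b) {s : ℝ} (hs : 0 ≤ s) :
    ∫ x in (-(1/2):ℝ)..(1/2), Real.exp (-b * (x + s)^2)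
      ≤ ∫ x in (-(1/2):ℝ)..(1/2), Real.exp (-b * x^2) := by
  have h0 : ∫ x in (-(1/2):ℝ)..(1/2), Real.exp (-b * (x + s)^2)
      = ∫ x in (-(1/2)+s:ℝ)..(1/2+s), Real.exp (-b * x^2) := by
    exact integral_comp_add_right (a := -(1/2)) (b := 1/2) (fun x => Real.exp (-b * x^2)) s
  have i1 : ∀ p q : ℝ, IntervalIntegrable (fun x => Real.exp (-b * x^2)) volume p q := by
    intro p q; apply Continuous.intervalIntegrable; continuity
  have hA : ∫ x in (-(1/2)+s:ℝ)..(1/2+s), Real.exp (-b * x^2)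
      = (∫ x in (-(1/2)+s:ℝ)..(1/2:ℝ), Real.exp (-b * x^2))
        + ∫ x in (1/2:ℝ)..(1/2+s), Real.exp (-b * x^2) :=
    (integral_add_adjacent_intervals (i1 _ _) (i1 _ _)).symm
  have hB : ∫ x in (-(1/2):ℝ)..(1/2), Real.exp (-b * x^2)
      = (∫ x in (-(1/2):ℝ)..(-(1/2)+s), Real.exp (-b * x^2))
        + ∫ x in (-(1/2)+s:ℝ)..(1/2:ℝ), Real.exp (-b * x^2) :=
    (integral_add_adjacent_intervals (i1 _ _) (i1 _ _)).symm
  have key : ∫ x in (1/2:ℝ)..(1/2+s), Real.exp (-b * x^2)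
      ≤ ∫ x in (-(1/2):ℝ)..(-(1/2)+s), Real.exp (-b * x^2) := by
    have ht : ∫ x in (1/2:ℝ)..(1/2+s), Real.exp (-b * x^2)
        = ∫ x in (-(1/2):ℝ)..(-(1/2)+s), Real.exp (-b * (x + 1)^2) := by
      have := integral_comp_add_right (fun x => Real.exp (-b * x^2)) 1 (a := -(1/2)) (b := -(1/2)+s)
      rw [this]
      have he : (-(1/2) + s + 1 : ℝ) = 1/2 + s := by ring
      have he2 : (-(1/2) + 1 : ℝ) = 1/2 := by ring
      rw [he, he2]
    rw [ht]
    apply integral_mono_on (by linarith) (expInt b 1) (by simpa using expInt b 0)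
    intro x hx
    have : -b * (x+1)^2 ≤ -b * x^2 := by nlinarith [hx.1]
    exact Real.exp_le_exp.2 this
  linarith [h0, hA, hB, key]

lemma shift_le (b : ℝ) (hb : 0 < b) (s : ℝ) :
    ∫ x in (-(1/2):ℝ)..(1/2), Real.exp (-b * (x + s)^2)
      ≤ ∫ x in (-(1/2):ℝ)..(1/2), Real.exp (-b * x^2) := by
  rcases le_or_gt 0 s with hs | hs
  · exact shift_le_aux b hb hs
  · have : ∫ x in (-(1/2):ℝ)..(1/2), Real.exp (-b * (x + s)^2)
        = ∫ x in (-(1/2):ℝ)..(1/2), Real.exp (-b * (x + (-s))^2) := by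
      have := integral_comp_neg (fun x => Real.exp (-b * (x + (-s))^2)) (a := -(1/2)) (b := 1/2)
      simp only [neg_neg] at this
      rw [← this]
      congr 1; ext x; ring_nf
    rw [this]
    exact shift_le_aux b hb (by linarith)

lemma centered_eq (r σ : ℝ) (hr : 0 < r) (hσ : 0 < σ) :
    ∫ x in (-(1/2):ℝ)..(1/2), r / (Real.sqrt (2*Real.pi) * σ) * Real.exp (-(r*x)^2/(2*σ^2))
      = phi σ r := by
  have i1 : ∀ (c : ℝ) (p q : ℝ), IntervalIntegrable (fun x => Real.exp (-((c*x)^2)/2)) volume p q := by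
    intro c p q; apply Continuous.intervalIntegrable; continuity
  have hrw : ∀ x : ℝ, -(r*x)^2/(2*σ^2) = -(((r/σ)*x)^2)/2 := by
    intro x
    have hσ' : (σ:ℝ) ≠ 0 := ne_of_gt hσ
    rw [div_eq_div_iff (by positivity) (by norm_num)]
    field_simp
  simp only [hrw]
  rw [intervalIntegral.integral_const_mul]
  -- even split
  have hsplit : ∫ x in (-(1/2):ℝ)..(1/2), Real.exp (-(((r/σ)*x)^2)/2)
      = 2 * ∫ x in (0:ℝ)..(1/2), Real.exp (-(((r/σ)*x)^2)/2) := by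
    have hadd := integral_add_adjacent_intervals (i1 (r/σ) (-(1/2)) 0) (i1 (r/σ) 0 (1/2))
    have hneg : ∫ x in (-(1/2):ℝ)..(0:ℝ), Real.exp (-(((r/σ)*x)^2)/2)
        = ∫ x in (0:ℝ)..(1/2), Real.exp (-(((r/σ)*x)^2)/2) := by
      have := integral_comp_neg (a := (0:ℝ)) (b := 1/2) (fun x => Real.exp (-(((r/σ)*x)^2)/2))
      simp only [neg_zero] at this
      rw [← this]
      congr 1; ext x; ring_nf
    linarith [hadd, hneg]
  rw [hsplit]
  have hc : (r/σ) ≠ 0 := by positivity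
  have hcomp : ∫ x in (0:ℝ)..(1/2), Real.exp (-(((r/σ)*x)^2)/2)
      = (r/σ)⁻¹ * ∫ t in (0:ℝ)..(r/(2*σ)), Real.exp (-(t^2)/2) := by
    have := integral_comp_mul_left (a := (0:ℝ)) (b := 1/2) (fun t => Real.exp (-(t^2)/2)) hc
    rw [this]
    norm_num
    left
    congr 1
    ring
  rw [hcomp, phi]
  have h2π : Real.sqrt (2*Real.pi) > 0 := Real.sqrt_pos.2 (by positivity)
  field_simp

lemma gauss_integrable (b : ℝ) (hb : 0 < b) (d : ℝ) :
    Integrable (fun x : ℝ => Real.exp (-b * (x + d)^2)) volume :=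
  (integrable_exp_neg_mul_sq hb).comp_add_right d

lemma mass_eq (r σ c : ℝ) (hr : 0 < r) (hσ : 0 < σ) :
    ∫ x : ℝ, r / (Real.sqrt (2*Real.pi) * σ) * Real.exp (-(r*x+c)^2/(2*σ^2)) = 1 := by
  have hb : (0:ℝ) < r^2/(2*σ^2) := by positivity
  have hrw : ∀ x : ℝ, -(r*x+c)^2/(2*σ^2) = -(r^2/(2*σ^2)) * (x + c/r)^2 := by
    intro x
    have hr' : r ≠ 0 := ne_of_gt hr
    field_simp
  simp only [hrw]
  rw [MeasureTheory.integral_const_mul]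
  have htrans : ∫ x : ℝ, Real.exp (-(r^2/(2*σ^2)) * (x + c/r)^2)
      = ∫ x : ℝ, Real.exp (-(r^2/(2*σ^2)) * x^2) := by
    exact integral_add_right_eq_self (fun x => Real.exp (-(r^2/(2*σ^2)) * x^2)) (c/r)
  rw [htrans, integral_gaussian]
  have hv : Real.pi / (r^2/(2*σ^2)) = (Real.sqrt (2*Real.pi) * σ / r)^2 := by
    rw [div_pow, mul_pow, Real.sq_sqrt (by positivity)]
    field_simp
  rw [hv, Real.sqrt_sq (by positivity)]
  field_simp

lemma phi_nonneg (σ r : ℝ) (hσ : 0 < σ) (hr : 0 ≤ r) : 0 ≤ phi σ r := by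
  unfold phi
  apply mul_nonneg (by positivity)
  apply intervalIntegral.integral_nonneg (by positivity)
  intro x _; positivity

lemma density_integrable (r σ c : ℝ) (hr : 0 < r) (hσ : 0 < σ) :
    Integrable (fun x : ℝ => r / (Real.sqrt (2*Real.pi) * σ) * Real.exp (-(r*x+c)^2/(2*σ^2))) volume := by
  have hb : (0:ℝ) < r^2/(2*σ^2) := by positivity
  have hrw : ∀ x : ℝ, -(r*x+c)^2/(2*σ^2) = -(r^2/(2*σ^2)) * (x + c/r)^2 := by
    intro x
    have hr' : r ≠ 0 := ne_of_gt hr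
    field_simp
  simp only [hrw]
  exact (gauss_integrable _ hb (c/r)).const_mul _

lemma icc_part_le (r σ c : ℝ) (hr : 0 < r) (hσ : 0 < σ) :
    ∫ x in Set.Icc (-(1/2):ℝ) (1/2), r / (Real.sqrt (2*Real.pi) * σ) * Real.exp (-(r*x+c)^2/(2*σ^2))
      ≤ phi σ r := by
  rw [MeasureTheory.integral_Icc_eq_integral_Ioc,
    ← intervalIntegral.integral_of_le (by norm_num : (-(1/2):ℝ) ≤ 1/2)]
  rw [← centered_eq r σ hr hσ]
  rw [intervalIntegral.integral_const_mul, intervalIntegral.integral_const_mul]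
  apply mul_le_mul_of_nonneg_left _ (by positivity)
  have hb : (0:ℝ) < r^2/(2*σ^2) := by positivity
  have hrw : ∀ x : ℝ, -(r*x+c)^2/(2*σ^2) = -(r^2/(2*σ^2)) * (x + c/r)^2 := by
    intro x
    have hr' : r ≠ 0 := ne_of_gt hr
    field_simp
  have hrw0 : ∀ x : ℝ, -(r*x)^2/(2*σ^2) = -(r^2/(2*σ^2)) * x^2 := by
    intro x
    have hr' : r ≠ 0 := ne_of_gt hr
    field_simp
  simp only [hrw, hrw0]
  exact shift_le _ hb (c/r)

lemma onedim (r σ m c : ℝ) (hr : 0 < r) (hσ : 0 < σ) (hm : 0 ≤ m) :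
    ∫⁻ x : ℝ, (1 + (Set.Icc (-(1/2):ℝ) (1/2)).indicator (fun _ => ENNReal.ofReal m) x)
        * ENNReal.ofReal (r / (Real.sqrt (2*Real.pi) * σ) * Real.exp (-(r*x+c)^2/(2*σ^2)))
      ≤ ENNReal.ofReal (1 + m * phi σ r) := by
  set d : ℝ → ℝ := fun x => r / (Real.sqrt (2*Real.pi) * σ) * Real.exp (-(r*x+c)^2/(2*σ^2)) with hd
  have hdint : Integrable d volume := density_integrable r σ c hr hσ
  have hdnn : ∀ x, 0 ≤ d x := by intro x; positivity
  have hdcont : Continuous d := by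
    apply Continuous.mul continuous_const
    exact Real.continuous_exp.comp (by continuity)
  have hdmeas : Measurable fun x => ENNReal.ofReal (d x) :=
    ENNReal.measurable_ofReal.comp hdcont.measurable
  have key : (fun x : ℝ => (1 + (Set.Icc (-(1/2):ℝ) (1/2)).indicator (fun _ => ENNReal.ofReal m) x)
      * ENNReal.ofReal (d x))
      = fun x => ENNReal.ofReal (d x)
        + (Set.Icc (-(1/2):ℝ) (1/2)).indicator (fun y => ENNReal.ofReal m * ENNReal.ofReal (d y)) x := by
    funext x
    by_cases hx : x ∈ Set.Icc (-(1/2):ℝ) (1/2)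
    · simp only [Set.indicator_of_mem hx]
      ring
    · simp only [Set.indicator_of_notMem hx, add_zero, zero_add, one_mul]
  calc ∫⁻ x : ℝ, (1 + (Set.Icc (-(1/2):ℝ) (1/2)).indicator (fun _ => ENNReal.ofReal m) x)
        * ENNReal.ofReal (d x)
      = (∫⁻ x : ℝ, ENNReal.ofReal (d x))
        + ∫⁻ x : ℝ, (Set.Icc (-(1/2):ℝ) (1/2)).indicator
            (fun y => ENNReal.ofReal m * ENNReal.ofReal (d y)) x := by
        rw [← lintegral_add_left hdmeas]
        exact lintegral_congr (fun x => congrFun key x)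
    _ = 1 + ENNReal.ofReal m * ∫⁻ x in Set.Icc (-(1/2):ℝ) (1/2), ENNReal.ofReal (d x) := by
        rw [lintegral_indicator measurableSet_Icc _, lintegral_const_mul _ hdmeas,
          ← ofReal_integral_eq_lintegral_ofReal hdint (Filter.Eventually.of_forall hdnn),
          mass_eq r σ c hr hσ, ENNReal.ofReal_one]
    _ ≤ 1 + ENNReal.ofReal m * ENNReal.ofReal (phi σ r) := by
        gcongr
        rw [← ofReal_integral_eq_lintegral_ofReal (hdint.restrict)
          (Filter.Eventually.of_forall hdnn)]
        exact ENNReal.ofReal_le_ofReal (icc_part_le r σ c hr hσ)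
    _ = ENNReal.ofReal (1 + m * phi σ r) := by
        rw [ENNReal.ofReal_add (by norm_num) (mul_nonneg hm (phi_nonneg σ r hσ (le_of_lt hr))),
          ENNReal.ofReal_one, ENNReal.ofReal_mul hm]

open Matrix
open scoped ENNReal
set_option maxHeartbeats 1000000

lemma meas_integrand (n : ℕ) (R : Matrix (Fin n) (Fin n) ℝ) (σ : ℝ) (m : Fin n → ℝ) :
    Measurable fun ξ : Fin n → ℝ =>
      ∏ i, ((1 + (Set.Icc (-(1/2):ℝ) (1/2)).indicator (fun _ => ENNReal.ofReal (m i)) (ξ i))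
        * ENNReal.ofReal (R i i / (Real.sqrt (2*Real.pi) * σ)
            * Real.exp (-((R *ᵥ ξ) i)^2/(2*σ^2)))) := by
  apply Finset.measurable_prod
  intro i _
  apply Measurable.mul
  · exact Measurable.add (f := fun _ => (1:ℝ≥0∞))
      (g := fun ξ : Fin n → ℝ => (Set.Icc (-(1/2):ℝ) (1/2)).indicator (fun _ => ENNReal.ofReal (m i)) (ξ i))
      measurable_const
      ((Measurable.indicator measurable_const measurableSet_Icc).comp (measurable_pi_apply i))
  · apply ENNReal.measurable_ofReal.comp
    apply Measurable.const_mul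
    apply Real.measurable_exp.comp
    apply Measurable.div_const
    apply Measurable.neg
    apply Measurable.pow_const
    simp only [Matrix.mulVec, dotProduct]
    exact Finset.measurable_sum _ (fun j _ => (measurable_pi_apply j).const_mul _)

lemma main_ind : ∀ (n : ℕ) (R : Matrix (Fin n) (Fin n) ℝ),
    (∀ i j : Fin n, j < i → R i j = 0) → (∀ i, 0 < R i i) →
    ∀ (σ : ℝ), 0 < σ → ∀ (m : Fin n → ℝ), (∀ i, 0 ≤ m i) →
    ∫⁻ ξ : Fin n → ℝ,
        ∏ i, ((1 + (Set.Icc (-(1/2):ℝ) (1/2)).indicator (fun _ => ENNReal.ofReal (m i)) (ξ i))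
          * ENNReal.ofReal (R i i / (Real.sqrt (2*Real.pi) * σ)
              * Real.exp (-((R *ᵥ ξ) i)^2/(2*σ^2))))
      ≤ ∏ i, ENNReal.ofReal (1 + m i * phi σ (R i i))
  | 0 => by
    intro R _ _ σ hσ m _
    simp only [Finset.univ_eq_empty, Finset.prod_empty, lintegral_const, one_mul]
    rw [MeasureTheory.volume_pi, Measure.pi_univ]
    simp
  | (n+1) => by
    intro R hup hdiag σ hσ m hm
    set R' : Matrix (Fin n) (Fin n) ℝ := Matrix.of (fun i j => R i.succ j.succ) with hR'
    have hup' : ∀ i j : Fin n, j < i → R' i j = 0 := fun i j h =>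
      hup i.succ j.succ (Fin.succ_lt_succ_iff.2 h)
    have hdiag' : ∀ i : Fin n, 0 < R' i i := fun i => hdiag i.succ
    have ih := main_ind n R' hup' hdiag' σ hσ (fun i => m i.succ) (fun i => hm i.succ)
    set F : (Fin (n+1) → ℝ) → ℝ≥0∞ := fun ξ =>
      ∏ i, ((1 + (Set.Icc (-(1/2):ℝ) (1/2)).indicator (fun _ => ENNReal.ofReal (m i)) (ξ i))
        * ENNReal.ofReal (R i i / (Real.sqrt (2*Real.pi) * σ)
            * Real.exp (-((R *ᵥ ξ) i)^2/(2*σ^2)))) with hF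
    have hFmeas : Measurable F := meas_integrand (n+1) R σ m
    set H : (Fin n → ℝ) → ℝ≥0∞ := fun y =>
      ∏ i, ((1 + (Set.Icc (-(1/2):ℝ) (1/2)).indicator (fun _ => ENNReal.ofReal (m i.succ)) (y i))
        * ENNReal.ofReal (R' i i / (Real.sqrt (2*Real.pi) * σ)
            * Real.exp (-((R' *ᵥ y) i)^2/(2*σ^2)))) with hH
    have hHmeas : Measurable H := meas_integrand n R' σ (fun i => m i.succ)
    set e := MeasurableEquiv.piFinSuccAbove (fun _ : Fin (n+1) => ℝ) 0 with he
    have hmp : MeasurePreserving (⇑e.symm)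
        ((volume : Measure ℝ).prod (Measure.pi fun _ : Fin n => volume))
        (Measure.pi fun _ : Fin (n+1) => volume) :=
      (measurePreserving_piFinSuccAbove (fun _ : Fin (n+1) => volume) 0).symm e
    have hsymm : ∀ (x : ℝ) (y : Fin n → ℝ), e.symm (x, y) = Fin.cons x y := by
      intro x y
      simp [he, MeasurableEquiv.piFinSuccAbove, Fin.insertNth_zero, Fin.consEquiv]
    have hcons : ∀ (x : ℝ) (y : Fin n → ℝ), F (Fin.cons x y) =
        ((1 + (Set.Icc (-(1/2):ℝ) (1/2)).indicator (fun _ => ENNReal.ofReal (m 0)) x)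
          * ENNReal.ofReal (R 0 0 / (Real.sqrt (2*Real.pi) * σ)
              * Real.exp (-((R 0 0) * x + ∑ j : Fin n, R 0 j.succ * y j)^2/(2*σ^2)))) * H y := by
      intro x y
      simp only [hF]
      rw [Fin.prod_univ_succ]
      congr 1
      · rw [Fin.cons_zero]
        congr 3
        simp [Matrix.mulVec, dotProduct, Fin.sum_univ_succ]
      · rw [hH]
        apply Finset.prod_congr rfl
        intro i _
        rw [Fin.cons_succ]
        congr 3
        have h0 : R i.succ 0 = 0 := hup i.succ 0 (Fin.succ_pos i)
        simp [Matrix.mulVec, dotProduct, Fin.sum_univ_succ, h0, hR']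
    have hGmeas : ∀ y : Fin n → ℝ, Measurable fun x : ℝ =>
        (1 + (Set.Icc (-(1/2):ℝ) (1/2)).indicator (fun _ => ENNReal.ofReal (m 0)) x)
          * ENNReal.ofReal (R 0 0 / (Real.sqrt (2*Real.pi) * σ)
              * Real.exp (-((R 0 0) * x + ∑ j : Fin n, R 0 j.succ * y j)^2/(2*σ^2))) := by
      intro y
      apply Measurable.mul
      · exact Measurable.add (f := fun _ => (1:ℝ≥0∞))
          (g := (Set.Icc (-(1/2):ℝ) (1/2)).indicator (fun _ => ENNReal.ofReal (m 0)))
          measurable_const (Measurable.indicator measurable_const measurableSet_Icc)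
      · apply ENNReal.measurable_ofReal.comp
        apply Measurable.const_mul
        apply Real.measurable_exp.comp
        apply Measurable.div_const
        apply Measurable.neg
        apply Measurable.pow_const
        exact (measurable_id.const_mul _).add_const _
    calc ∫⁻ ξ : Fin (n+1) → ℝ, F ξ
        = ∫⁻ ξ : Fin (n+1) → ℝ, F ξ ∂(Measure.pi fun _ => volume) := by rw [← volume_pi]
      _ = ∫⁻ p : ℝ × (Fin n → ℝ), F (e.symm p)
            ∂((volume : Measure ℝ).prod (Measure.pi fun _ : Fin n => volume)) :=
          (hmp.lintegral_comp hFmeas).symm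
      _ = ∫⁻ y : Fin n → ℝ, (∫⁻ x : ℝ, F (e.symm (x, y))) ∂(Measure.pi fun _ : Fin n => volume) :=
          lintegral_prod_symm _ (hFmeas.comp e.symm.measurable).aemeasurable
      _ ≤ ∫⁻ y : Fin n → ℝ, ENNReal.ofReal (1 + m 0 * phi σ (R 0 0)) * H y
            ∂(Measure.pi fun _ : Fin n => volume) := by
          apply lintegral_mono
          intro y
          calc ∫⁻ x : ℝ, F (e.symm (x, y))
              = (∫⁻ x : ℝ, (1 + (Set.Icc (-(1/2):ℝ) (1/2)).indicator
                    (fun _ => ENNReal.ofReal (m 0)) x)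
                  * ENNReal.ofReal (R 0 0 / (Real.sqrt (2*Real.pi) * σ)
                    * Real.exp (-((R 0 0) * x + ∑ j : Fin n, R 0 j.succ * y j)^2/(2*σ^2)))) * H y := by
                rw [← lintegral_mul_const _ (hGmeas y)]
                apply lintegral_congr
                intro x
                rw [hsymm x y, hcons x y]
            _ ≤ ENNReal.ofReal (1 + m 0 * phi σ (R 0 0)) * H y :=
                mul_le_mul_left (onedim (R 0 0) σ (m 0) _ (hdiag 0) hσ (hm 0)) _
      _ = ENNReal.ofReal (1 + m 0 * phi σ (R 0 0))
            * ∫⁻ y : Fin n → ℝ, H y ∂(Measure.pi fun _ : Fin n => volume) :=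
          lintegral_const_mul _ hHmeas
      _ ≤ ENNReal.ofReal (1 + m 0 * phi σ (R 0 0))
            * ∏ i : Fin n, ENNReal.ofReal (1 + m i.succ * phi σ (R' i i)) := by
          apply mul_le_mul_right
          rw [← volume_pi] at *
          exact ih
      _ = ∏ i : Fin (n+1), ENNReal.ofReal (1 + m i * phi σ (R i i)) := by
          rw [Fin.prod_univ_succ]
          rfl

lemma coordSum (l u : ℤ) (h : l < u) (ξ : ℝ) :
    ∑ x ∈ Finset.Icc l u,
      (if x = l then Set.Iic (1/2:ℝ) else if x = u then Set.Ici (-(1/2):ℝ)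
        else Set.Icc (-(1/2):ℝ) (1/2)).indicator (fun _ => (1:ℝ≥0∞)) ξ
    = 1 + (Set.Icc (-(1/2):ℝ) (1/2)).indicator
        (fun _ => ENNReal.ofReal ((u - l : ℤ):ℝ)) ξ := by
  have hIcc : Finset.Icc l u = insert l (insert u (Finset.Ioo l u)) := by
    rw [Finset.Ioo_insert_right h, Finset.Ioc_insert_left (le_of_lt h)]
  have hl1 : l ∉ insert u (Finset.Ioo l u) := by
    simp only [Finset.mem_insert, Finset.mem_Ioo]
    omega
  have hu1 : u ∉ Finset.Ioo l u := by
    simp only [Finset.mem_Ioo]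
    omega
  rw [hIcc, Finset.sum_insert hl1, Finset.sum_insert hu1]
  rw [if_pos rfl, if_neg (by omega : u ≠ l), if_pos rfl]
  have hconst : ∀ x ∈ Finset.Ioo l u,
      (if x = l then Set.Iic (1/2:ℝ) else if x = u then Set.Ici (-(1/2):ℝ)
        else Set.Icc (-(1/2):ℝ) (1/2)).indicator (fun _ => (1:ℝ≥0∞)) ξ
      = (Set.Icc (-(1/2):ℝ) (1/2)).indicator (fun _ => (1:ℝ≥0∞)) ξ := by
    intro x hx
    rw [Finset.mem_Ioo] at hx
    rw [if_neg (by omega), if_neg (by omega)]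
  rw [Finset.sum_congr rfl hconst, Finset.sum_const, Int.card_Ioo, nsmul_eq_mul]
  have hcast : ENNReal.ofReal ((u - l : ℤ):ℝ) = ((u - l - 1).toNat : ℝ≥0∞) + 1 := by
    have h1 : ((u - l - 1).toNat : ℝ) = ((u - l : ℤ) : ℝ) - 1 := by
      have h0 := Int.toNat_of_nonneg (by omega : (0:ℤ) ≤ u - l - 1)
      rw [show ((u - l - 1).toNat : ℝ) = (((u - l - 1).toNat : ℤ) : ℝ) from by push_cast; ring,
        h0]
      push_cast
      ring
    rw [show ((u - l - 1).toNat : ℝ≥0∞) = ENNReal.ofReal ((u - l - 1).toNat : ℝ) by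
        rw [ENNReal.ofReal_natCast],
      ← ENNReal.ofReal_one, ← ENNReal.ofReal_add (by positivity) (by norm_num), h1]
    norm_num
  by_cases hmem : ξ ∈ Set.Icc (-(1/2):ℝ) (1/2)
  · have hIic : ξ ∈ Set.Iic (1/2:ℝ) := hmem.2
    have hIci : ξ ∈ Set.Ici (-(1/2):ℝ) := hmem.1
    rw [Set.indicator_of_mem hmem, Set.indicator_of_mem hmem, Set.indicator_of_mem hIic,
      Set.indicator_of_mem hIci, hcast]
    ring
  · rw [Set.indicator_of_notMem hmem, Set.indicator_of_notMem hmem, mul_zero, add_zero,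
      add_zero]
    rw [Set.mem_Icc, not_and_or, not_le, not_le] at hmem
    rcases hmem with h' | h'
    · rw [Set.indicator_of_mem (by simp only [Set.mem_Iic]; linarith : ξ ∈ Set.Iic (1/2:ℝ)),
        Set.indicator_of_notMem (by simp only [Set.mem_Ici, not_le]; linarith)]
      ring
    · rw [Set.indicator_of_notMem (by simp only [Set.mem_Iic, not_le]; linarith),
        Set.indicator_of_mem (by simp only [Set.mem_Ici]; linarith : ξ ∈ Set.Ici (-(1/2):ℝ))]
      ring

lemma indicator_pi {n : ℕ} (t : Fin n → Set ℝ) (ξ : Fin n → ℝ) :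
    (Set.univ.pi t).indicator (fun _ => (1:ℝ≥0∞)) ξ
      = ∏ i, (t i).indicator (fun _ => (1:ℝ≥0∞)) (ξ i) := by
  by_cases h : ξ ∈ Set.univ.pi t
  · rw [Set.indicator_of_mem h]
    rw [Set.mem_univ_pi] at h
    rw [Finset.prod_congr rfl (fun i _ => Set.indicator_of_mem (h i) _)]
    simp
  · rw [Set.indicator_of_notMem h]
    rw [Set.mem_univ_pi] at h
    push_neg at h
    obtain ⟨i, hi⟩ := h
    exact (Finset.prod_eq_zero (Finset.mem_univ i) (Set.indicator_of_notMem hi _)).symm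

lemma f_meas (n : ℕ) (R : Matrix (Fin n) (Fin n) ℝ) (σ : ℝ) :
    Measurable fun ξ : Fin n → ℝ => Real.exp (-(∑ j, ((R *ᵥ ξ) j)^2) / (2*σ^2)) := by
  apply Real.measurable_exp.comp
  apply Measurable.div_const
  apply Measurable.neg
  apply Finset.measurable_sum
  intro j _
  apply Measurable.pow_const
  simp only [Matrix.mulVec, dotProduct]
  exact Finset.measurable_sum _ (fun k _ => (measurable_pi_apply k).const_mul _)

lemma master (n : ℕ) (R : Matrix (Fin n) (Fin n) ℝ)
    (hupper : ∀ i j : Fin n, j < i → R i j = 0) (hdiag : ∀ i : Fin n, 0 < R i i)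
    (σ : ℝ) (hσ : 0 < σ) (l u : Fin n → ℤ) (hlu : ∀ i, l i < u i) :
    ENNReal.ofReal (∏ i, R i i / (Real.sqrt (2*Real.pi) * σ)) *
      ∑ xb ∈ Fintype.piFinset (fun i => Finset.Icc (l i) (u i)),
        ∫⁻ ξ in Set.univ.pi (fun i =>
            if xb i = l i then Set.Iic (1/2:ℝ)
            else if xb i = u i then Set.Ici (-(1/2):ℝ)
            else Set.Icc (-(1/2):ℝ) (1/2)),
          ENNReal.ofReal (Real.exp (-(∑ j, ((R *ᵥ ξ) j)^2) / (2*σ^2)))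
    ≤ ∏ i, ENNReal.ofReal (1 + ((u i - l i : ℤ):ℝ) * phi σ (R i i)) := by
  set m : Fin n → ℝ := fun i => ((u i - l i : ℤ):ℝ) with hm
  have hm0 : ∀ i, 0 ≤ m i := fun i => by
    have h1 := hlu i
    have h2 : (0:ℤ) ≤ u i - l i := by omega
    simp only [hm]
    exact_mod_cast h2
  set f : (Fin n → ℝ) → ℝ := fun ξ => Real.exp (-(∑ j, ((R *ᵥ ξ) j)^2) / (2*σ^2)) with hf
  have hfmeas : Measurable f := f_meas n R σ
  set t : (Fin n → ℤ) → Fin n → Set ℝ := fun xb i =>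
    if xb i = l i then Set.Iic (1/2:ℝ) else if xb i = u i then Set.Ici (-(1/2):ℝ)
      else Set.Icc (-(1/2):ℝ) (1/2) with ht
  have htmeas : ∀ xb i, MeasurableSet (t xb i) := by
    intro xb i
    simp only [ht]
    split_ifs
    exacts [measurableSet_Iic, measurableSet_Ici, measurableSet_Icc]
  have hGmeas : Measurable fun ξ : Fin n → ℝ =>
      (∏ i, (1 + (Set.Icc (-(1/2):ℝ) (1/2)).indicator (fun _ => ENNReal.ofReal (m i)) (ξ i)))
        * ENNReal.ofReal (f ξ) := by
    apply Measurable.mul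
    · apply Finset.measurable_prod
      intro i _
      exact Measurable.add (f := fun _ => (1:ℝ≥0∞))
        (g := fun ξ : Fin n → ℝ => (Set.Icc (-(1/2):ℝ) (1/2)).indicator (fun _ => ENNReal.ofReal (m i)) (ξ i))
        measurable_const
        ((Measurable.indicator measurable_const measurableSet_Icc).comp (measurable_pi_apply i))
    · exact ENNReal.measurable_ofReal.comp hfmeas
  have hBsum : ∀ ξ : Fin n → ℝ,
      ∑ xb ∈ Fintype.piFinset (fun i => Finset.Icc (l i) (u i)),
        (Set.univ.pi (t xb)).indicator (fun _ => (1:ℝ≥0∞)) ξ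
      = ∏ i, (1 + (Set.Icc (-(1/2):ℝ) (1/2)).indicator (fun _ => ENNReal.ofReal (m i)) (ξ i)) := by
    intro ξ
    rw [Finset.sum_congr rfl (fun xb _ => indicator_pi (t xb) ξ),
      ← Finset.prod_univ_sum (fun i => Finset.Icc (l i) (u i))
        (fun i x => (if x = l i then Set.Iic (1/2:ℝ) else if x = u i then Set.Ici (-(1/2):ℝ)
          else Set.Icc (-(1/2):ℝ) (1/2)).indicator (fun _ => (1:ℝ≥0∞)) (ξ i))]
    exact Finset.prod_congr rfl fun i _ => coordSum (l i) (u i) (hlu i) (ξ i)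
  have hsum_eq : ∑ xb ∈ Fintype.piFinset (fun i => Finset.Icc (l i) (u i)),
      ∫⁻ ξ in Set.univ.pi (t xb), ENNReal.ofReal (f ξ)
      = ∫⁻ ξ, (∏ i, (1 + (Set.Icc (-(1/2):ℝ) (1/2)).indicator
          (fun _ => ENNReal.ofReal (m i)) (ξ i))) * ENNReal.ofReal (f ξ) := by
    have hterm : ∀ xb, ∫⁻ ξ in Set.univ.pi (t xb), ENNReal.ofReal (f ξ)
        = ∫⁻ ξ, (Set.univ.pi (t xb)).indicator (fun _ => (1:ℝ≥0∞)) ξ * ENNReal.ofReal (f ξ) := by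
      intro xb
      rw [← lintegral_indicator (MeasurableSet.univ_pi (htmeas xb))]
      apply lintegral_congr
      intro ξ
      by_cases hξ : ξ ∈ Set.univ.pi (t xb)
      · rw [Set.indicator_of_mem hξ, Set.indicator_of_mem hξ, one_mul]
      · rw [Set.indicator_of_notMem hξ, Set.indicator_of_notMem hξ, zero_mul]
    refine (Finset.sum_congr rfl (fun xb _ => hterm xb)).trans ?_
    rw [← lintegral_finset_sum _
      (f := fun xb ξ =>
        (Set.univ.pi (t xb)).indicator (fun _ => (1:ℝ≥0∞)) ξ * ENNReal.ofReal (f ξ))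
      (fun xb _ =>
        ((measurable_const.indicator (MeasurableSet.univ_pi (htmeas xb))).mul
          (ENNReal.measurable_ofReal.comp hfmeas)))]
    apply lintegral_congr
    intro ξ
    rw [← Finset.sum_mul, hBsum ξ]
  rw [hsum_eq, ← lintegral_const_mul _ hGmeas]
  refine le_trans (le_of_eq (lintegral_congr fun ξ => ?_)) (main_ind n R hupper hdiag σ hσ m hm0)
  have h1 : ∏ i, ENNReal.ofReal (R i i / (Real.sqrt (2*Real.pi) * σ)
        * Real.exp (-((R *ᵥ ξ) i)^2/(2*σ^2)))
      = ENNReal.ofReal (∏ i, R i i / (Real.sqrt (2*Real.pi) * σ)) * ENNReal.ofReal (f ξ) := by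
    rw [← ENNReal.ofReal_prod_of_nonneg (fun i _ =>
        mul_nonneg (div_nonneg (hdiag i).le (by positivity)) (Real.exp_nonneg _)),
      ← ENNReal.ofReal_mul (Finset.prod_nonneg fun i _ => div_nonneg (hdiag i).le (by positivity))]
    congr 1
    rw [Finset.prod_mul_distrib]
    congr 1
    rw [← Real.exp_sum]
    simp only [hf]
    congr 1
    rw [← Finset.sum_div]
    congr 1
    rw [← Finset.sum_neg_distrib]
  rw [Finset.prod_mul_distrib, h1]
  ring

/-- Integral form of Theorem 5 of the paper: the averaged rounding success probability over
the box is at most the product formula for the Babai success probability. -/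
theorem avg_roundingSuccess_le_babai_prod
    {n : ℕ} (hn : 1 ≤ n)
    (R : Matrix (Fin n) (Fin n) ℝ)
    (hupper : ∀ i j : Fin n, j < i → R i j = 0)
    (hdiag : ∀ i : Fin n, 0 < R i i)
    (σ : ℝ) (hσ : 0 < σ)
    (l u : Fin n → ℤ) (hlu : ∀ i, l i < u i)
    (B : Finset (Fin n → ℤ)) (hB : B = Fintype.piFinset fun i => Finset.Icc (l i) (u i)) :
    (1 / ∏ i, ((u i - l i + 1 : ℤ) : ℝ)) *
        ∑ xb ∈ B,
          R.det / (2 * Real.pi * σ ^ 2) ^ ((n : ℝ) / 2) *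
            ∫ ξ in Set.univ.pi (fun i =>
            if xb i = l i then Set.Iic (1 / 2 : ℝ)
            else if xb i = u i then Set.Ici (-(1 / 2) : ℝ)
            else Set.Icc (-(1 / 2) : ℝ) (1 / 2)),
              Real.exp (-(∑ j, ((R *ᵥ ξ) j) ^ 2) / (2 * σ ^ 2))
      ≤ ∏ i, (1 / ((u i - l i + 1 : ℤ) : ℝ)
              + (((u i - l i : ℤ) : ℝ) / ((u i - l i + 1 : ℤ) : ℝ)) * phi σ (R i i)) := by

  subst hB
  have hmge : ∀ i, (0:ℝ) ≤ ((u i - l i : ℤ):ℝ) := fun i => by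
    have h1 := hlu i
    have h2 : (0:ℤ) ≤ u i - l i := by omega
    exact_mod_cast h2
  have hM : ∀ i, ((u i - l i + 1 : ℤ):ℝ) = ((u i - l i : ℤ):ℝ) + 1 := fun i => by push_cast; ring
  have hMpos : ∀ i, (0:ℝ) < ((u i - l i : ℤ):ℝ) + 1 := fun i => by have := hmge i; linarith
  have hphinn : ∀ i, 0 ≤ phi σ (R i i) := fun i => phi_nonneg σ (R i i) hσ (hdiag i).le
  have hkCnn : (0:ℝ) ≤ ∏ i, R i i / (Real.sqrt (2*Real.pi) * σ) :=
    Finset.prod_nonneg fun i _ => div_nonneg (hdiag i).le (by positivity)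
  have hkCpos : (0:ℝ) < ∏ i, R i i / (Real.sqrt (2*Real.pi) * σ) :=
    Finset.prod_pos fun i _ => div_pos (hdiag i) (by positivity)
  have hfmeas := f_meas n R σ
  have hCeq : R.det / (2*Real.pi*σ^2)^((n:ℝ)/2) = ∏ i, R i i / (Real.sqrt (2*Real.pi) * σ) := by
    have hdet : R.det = ∏ i, R i i := Matrix.det_of_upperTriangular (fun i j hij => hupper i j hij)
    have hb : (0:ℝ) ≤ 2*Real.pi*σ^2 := by positivity
    have hpow : (2*Real.pi*σ^2)^((n:ℝ)/2) = (Real.sqrt (2*Real.pi) * σ)^(n:ℕ) := by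
      rw [show ((n:ℝ)/2) = (1/2) * ((n:ℕ):ℝ) by push_cast; ring, Real.rpow_mul hb,
        Real.rpow_natCast]
      congr 1
      rw [← Real.sqrt_eq_rpow, Real.sqrt_mul (by positivity) (σ^2), Real.sqrt_sq hσ.le]
    rw [hdet, hpow, Finset.prod_div_distrib, Finset.prod_const, Finset.card_univ,
      Fintype.card_fin]
  have hmaster := master n R hupper hdiag σ hσ l u hlu
  set T : ℝ≥0∞ := ∏ i, ENNReal.ofReal (1 + ((u i - l i : ℤ):ℝ) * phi σ (R i i)) with hT
  set L : (Fin n → ℤ) → ℝ≥0∞ := fun xb =>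
    ∫⁻ ξ in Set.univ.pi (fun i =>
        if xb i = l i then Set.Iic (1/2:ℝ)
        else if xb i = u i then Set.Ici (-(1/2):ℝ)
        else Set.Icc (-(1/2):ℝ) (1/2)),
      ENNReal.ofReal (Real.exp (-(∑ j, ((R *ᵥ ξ) j)^2) / (2*σ^2))) with hL
  have hTne : T ≠ ⊤ := (ENNReal.prod_lt_top (fun i _ => ENNReal.ofReal_lt_top)).ne
  have hkC0 : ENNReal.ofReal (∏ i, R i i / (Real.sqrt (2*Real.pi) * σ)) ≠ 0 :=
    (ENNReal.ofReal_pos.2 hkCpos).ne'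
  have hsumne : (∑ xb ∈ Fintype.piFinset (fun i => Finset.Icc (l i) (u i)), L xb) ≠ ⊤ := by
    intro h
    rw [h, ENNReal.mul_top hkC0] at hmaster
    exact hTne (top_le_iff.mp hmaster)
  have hLne : ∀ xb ∈ Fintype.piFinset (fun i => Finset.Icc (l i) (u i)), L xb ≠ ⊤ :=
    fun xb hxb => ne_top_of_le_ne_top hsumne
      (Finset.single_le_sum (fun _ _ => by positivity) hxb)
  have hint : ∀ xb : Fin n → ℤ,
      ∫ ξ in Set.univ.pi (fun i =>
          if xb i = l i then Set.Iic (1/2:ℝ)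
          else if xb i = u i then Set.Ici (-(1/2):ℝ)
          else Set.Icc (-(1/2):ℝ) (1/2)),
        Real.exp (-(∑ j, ((R *ᵥ ξ) j)^2) / (2*σ^2)) = (L xb).toReal := fun xb =>
    integral_eq_lintegral_of_nonneg_ae
      (Filter.Eventually.of_forall fun ξ => Real.exp_nonneg _)
      hfmeas.aestronglyMeasurable
  have hden : ∏ i, ((u i - l i + 1 : ℤ):ℝ) = ∏ i, (((u i - l i : ℤ):ℝ) + 1) :=
    Finset.prod_congr rfl fun i _ => hM i
  calc (1 / ∏ i, ((u i - l i + 1 : ℤ) : ℝ)) *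
        ∑ xb ∈ Fintype.piFinset (fun i => Finset.Icc (l i) (u i)),
          R.det / (2 * Real.pi * σ ^ 2) ^ ((n : ℝ) / 2) *
            ∫ ξ in Set.univ.pi (fun i =>
            if xb i = l i then Set.Iic (1 / 2 : ℝ)
            else if xb i = u i then Set.Ici (-(1 / 2) : ℝ)
            else Set.Icc (-(1 / 2) : ℝ) (1 / 2)),
              Real.exp (-(∑ j, ((R *ᵥ ξ) j) ^ 2) / (2 * σ ^ 2))
      = (1 / ∏ i, (((u i - l i : ℤ):ℝ) + 1)) *
          ((ENNReal.ofReal (∏ i, R i i / (Real.sqrt (2*Real.pi) * σ)) *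
            ∑ xb ∈ Fintype.piFinset (fun i => Finset.Icc (l i) (u i)), L xb).toReal) := by
        rw [hden, Finset.sum_congr rfl (fun xb _ => by rw [hCeq, hint xb]),
          ← Finset.mul_sum, ← ENNReal.toReal_sum hLne, ENNReal.toReal_mul,
          ENNReal.toReal_ofReal hkCnn]
    _ ≤ (1 / ∏ i, (((u i - l i : ℤ):ℝ) + 1)) * T.toReal := by
        apply mul_le_mul_of_nonneg_left (ENNReal.toReal_mono hTne hmaster)
        have : (0:ℝ) < ∏ i, (((u i - l i : ℤ):ℝ) + 1) := Finset.prod_pos fun i _ => hMpos i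
        positivity
    _ = ∏ i, (1 / ((u i - l i + 1 : ℤ) : ℝ)
          + (((u i - l i : ℤ) : ℝ) / ((u i - l i + 1 : ℤ) : ℝ)) * phi σ (R i i)) := by
        have hTval : T.toReal = ∏ i, (1 + ((u i - l i : ℤ):ℝ) * phi σ (R i i)) := by
          rw [hT, ENNReal.toReal_prod]
          exact Finset.prod_congr rfl fun i _ => ENNReal.toReal_ofReal
            (by have := hmge i; have := hphinn i; positivity)
        have hfac : ∀ i : Fin n, 1 / ((u i - l i + 1 : ℤ) : ℝ)
            + (((u i - l i : ℤ) : ℝ) / ((u i - l i + 1 : ℤ) : ℝ)) * phi σ (R i i)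
            = (1 + ((u i - l i : ℤ):ℝ) * phi σ (R i i)) / (((u i - l i : ℤ):ℝ) + 1) := by
          intro i
          rw [hM i]
          field_simp
        rw [hTval, Finset.prod_congr rfl (fun i _ => hfac i), Finset.prod_div_distrib]
        ring
end

section
/- With σ = 1 and R = [[2, −1], [0, 1]], the success probability of the 2-dimensional box-constrained rounding detector at a corner parameter strictly exceeds that of the Babai detector: (1/π) · ∫_{−∞}^{1/2} ∫_{−∞}^{1/2} exp(−(1/2) ((2ξ_1 − ξ_2)² + ξ_2²)) dξ_1 dξ_2 > (1/4) · (1 + φ_1(1)) · (1 + φ_1(2)), where φ_1(ζ) = (2/√(2π)) ∫_0^{ζ/2} exp(−t²/2) dt. -/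
open MeasureTheory ProbabilityTheory Matrix
open scoped ENNReal NNReal

section AuxGauss
open MeasureTheory Set

noncomputable def g0 (u : ℝ) : ℝ := Real.exp (-u ^ 2 / 2)

noncomputable def E0 (s : ℝ) : ℝ := ∫ u in Set.Iic s, g0 u

lemma g0_eq : g0 = fun u : ℝ => Real.exp (-(1/2 : ℝ) * u ^ 2) := by
  funext u; unfold g0; ring_nf

lemma g0_pos (u : ℝ) : 0 < g0 u := Real.exp_pos _

lemma g0_le_one (u : ℝ) : g0 u ≤ 1 := by
  unfold g0
  rw [Real.exp_le_one_iff]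
  nlinarith [sq_nonneg u]

lemma intg : Integrable g0 := by
  rw [g0_eq]
  exact integrable_exp_neg_mul_sq (by norm_num)

lemma g0_cont : Continuous g0 := by
  unfold g0; continuity

lemma E0_mono : Monotone E0 := fun a b hab => by
  unfold E0
  refine setIntegral_mono_set intg.integrableOn ?_ ?_
  · exact Filter.Eventually.of_forall fun u => (g0_pos u).le
  · exact HasSubset.Subset.eventuallyLE (Iic_subset_Iic.mpr hab)

lemma E0_nonneg (s : ℝ) : 0 ≤ E0 s :=
  setIntegral_nonneg measurableSet_Iic fun u _ => (g0_pos u).le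

lemma E0_le_total (s : ℝ) : E0 s ≤ ∫ u, g0 u :=
  setIntegral_le_integral intg (Filter.Eventually.of_forall fun u => (g0_pos u).le)

lemma E0_sub (a b : ℝ) (hab : a ≤ b) : E0 b - E0 a = ∫ u in Set.Ioc a b, g0 u := by
  unfold E0
  rw [intervalIntegral.integral_Iic_sub_Iic intg.integrableOn intg.integrableOn,
    intervalIntegral.integral_of_le hab]

lemma exp_neg_le {x : ℝ} (hx : 0 ≤ x) : Real.exp (-x) ≤ (8 / (8 + x)) ^ 8 := by
  have h8 : (0:ℝ) < 8 + x := by linarith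
  have h1 : Real.exp (x / 8) ≥ 1 + x / 8 := by
    have := Real.add_one_le_exp (x / 8); linarith
  have h2 : Real.exp (-(x / 8)) ≤ 8 / (8 + x) := by
    rw [Real.exp_neg, inv_eq_one_div, div_le_div_iff₀ (Real.exp_pos _) h8]
    nlinarith [Real.exp_pos (x / 8)]
  calc Real.exp (-x) = Real.exp (-(x/8)) ^ 8 := by
        rw [← Real.exp_nat_mul]; norm_num; ring_nf
    _ ≤ (8 / (8 + x)) ^ 8 := pow_le_pow_left₀ (Real.exp_pos _).le h2 8

lemma le_exp_neg {x : ℝ} (h8 : x ≤ 8) : (1 - x / 8) ^ 8 ≤ Real.exp (-x) := by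
  have h1 : 1 - x / 8 ≤ Real.exp (-(x / 8)) := by
    have := Real.add_one_le_exp (-(x / 8)); linarith
  have h0 : 0 ≤ 1 - x / 8 := by linarith
  calc (1 - x / 8) ^ 8 ≤ Real.exp (-(x/8)) ^ 8 := pow_le_pow_left₀ h0 h1 8
    _ = Real.exp (-x) := by rw [← Real.exp_nat_mul]; norm_num; ring_nf

lemma intg_Ioc_le {a b c : ℝ} (hab : a ≤ b) (h : ∀ u ∈ Set.Ioc a b, g0 u ≤ c) :
    ∫ u in Set.Ioc a b, g0 u ≤ (b - a) * c := by
  have h1 : ∫ u in Set.Ioc a b, g0 u ≤ ∫ _u in Set.Ioc a b, c :=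
    setIntegral_mono_on intg.integrableOn (integrableOn_const (by
      rw [Real.volume_Ioc]; exact ENNReal.ofReal_ne_top)) measurableSet_Ioc h
  rwa [setIntegral_const, Real.volume_real_Ioc_of_le hab, smul_eq_mul] at h1

lemma le_intg_Ioc {a b c : ℝ} (hab : a ≤ b) (h : ∀ u ∈ Set.Ioc a b, c ≤ g0 u) :
    (b - a) * c ≤ ∫ u in Set.Ioc a b, g0 u := by
  have h1 : ∫ _u in Set.Ioc a b, c ≤ ∫ u in Set.Ioc a b, g0 u :=
    setIntegral_mono_on (integrableOn_const (by
      rw [Real.volume_Ioc]; exact ENNReal.ofReal_ne_top)) intg.integrableOn measurableSet_Ioc h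
  rwa [setIntegral_const, Real.volume_real_Ioc_of_le hab, smul_eq_mul] at h1

/-- lower bound for a Gaussian slice: if `u^2 ≤ m` on the slice, `m ≤ 16`. -/
lemma piece_lower {a b m : ℝ} (hab : a ≤ b) (hm : ∀ u ∈ Set.Ioc a b, u ^ 2 ≤ m)
    (hm16 : m ≤ 16) : (b - a) * (1 - m / 16) ^ 8 ≤ E0 b - E0 a := by
  rw [E0_sub a b hab]
  refine le_intg_Ioc hab fun u hu => ?_
  have h1 : (1 - u ^ 2 / 2 / 8) ^ 8 ≤ g0 u := by
    have := le_exp_neg (x := u ^ 2 / 2) (by linarith [hm u hu])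
    unfold g0
    rw [show (-u ^ 2 / 2 : ℝ) = -(u ^ 2 / 2) by ring]
    exact this
  refine le_trans ?_ h1
  apply pow_le_pow_left₀ (by nlinarith) (by nlinarith [hm u hu])

lemma piece_upper {a b m : ℝ} (hab : a ≤ b) (hm : ∀ u ∈ Set.Ioc a b, m ≤ u ^ 2)
    (hm0 : 0 ≤ m) : E0 b - E0 a ≤ (b - a) * (8 / (8 + m / 2)) ^ 8 := by
  rw [E0_sub a b hab]
  refine intg_Ioc_le hab fun u hu => ?_
  have h1 : g0 u ≤ (8 / (8 + u ^ 2 / 2)) ^ 8 := by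
    have := exp_neg_le (x := u ^ 2 / 2) (by positivity)
    unfold g0
    rw [show (-u ^ 2 / 2 : ℝ) = -(u ^ 2 / 2) by ring]
    exact this
  refine h1.trans ?_
  have hu2 : m / 2 ≤ u ^ 2 / 2 := by linarith [hm u hu]
  apply pow_le_pow_left₀ (by positivity)
  apply div_le_div_of_nonneg_left (by norm_num) (by linarith) (by linarith)

noncomputable def F0 (v : ℝ) : ℝ := g0 v * (E0 (1 - v) - E0 1)

lemma E0_anti : Antitone fun v : ℝ => E0 (1 - v) := fun x y hxy =>
  E0_mono (by linarith)

lemma F0_meas : Measurable F0 :=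
  g0_cont.measurable.mul (E0_anti.measurable.sub measurable_const)

lemma F0_int : Integrable F0 := by
  set T := ∫ u, g0 u with hT
  have hT0 : 0 ≤ T := integral_nonneg fun u => (g0_pos u).le
  refine Integrable.mono' (intg.const_mul T) F0_meas.aestronglyMeasurable ?_
  refine Filter.Eventually.of_forall fun v => ?_
  unfold F0
  rw [Real.norm_eq_abs, abs_mul, abs_of_pos (g0_pos v), mul_comm T]
  refine mul_le_mul_of_nonneg_left ?_ (g0_pos v).le
  rw [abs_le]
  constructor
  · have := E0_nonneg (1 - v); have := E0_le_total 1; linarith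
  · have := E0_nonneg 1; have := E0_le_total (1 - v); linarith


lemma hEa : (1/4 : ℝ)*((231/256)^8+(55/64)^8) ≤ E0 (3/2) - E0 1 := by
  have h1 := piece_lower (a := 1) (b := 5/4) (m := 25/16) (by norm_num)
    (fun u hu => by obtain ⟨h1, h2⟩ := hu; nlinarith) (by norm_num)
  have h2 := piece_lower (a := 5/4) (b := 3/2) (m := 9/4) (by norm_num)
    (fun u hu => by obtain ⟨h1, h2⟩ := hu; nlinarith) (by norm_num)
  norm_num at h1 h2 ⊢
  linarith

lemma hEb : (1/4 : ℝ)*((3/4)^8+(207/256)^8+(55/64)^8+(231/256)^8+(15/16)^8+(247/256)^8)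
    ≤ E0 (-(1/2)) := by
  have h1 := piece_lower (a := -2) (b := -(7/4)) (m := 4) (by norm_num)
    (fun u hu => by obtain ⟨h1, h2⟩ := hu; nlinarith) (by norm_num)
  have h2 := piece_lower (a := -(7/4)) (b := -(3/2)) (m := 49/16) (by norm_num)
    (fun u hu => by obtain ⟨h1, h2⟩ := hu; nlinarith) (by norm_num)
  have h3 := piece_lower (a := -(3/2)) (b := -(5/4)) (m := 9/4) (by norm_num)
    (fun u hu => by obtain ⟨h1, h2⟩ := hu; nlinarith) (by norm_num)
  have h4 := piece_lower (a := -(5/4)) (b := -1) (m := 25/16) (by norm_num)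
    (fun u hu => by obtain ⟨h1, h2⟩ := hu; nlinarith) (by norm_num)
  have h5 := piece_lower (a := -1) (b := -(3/4)) (m := 1) (by norm_num)
    (fun u hu => by obtain ⟨h1, h2⟩ := hu; nlinarith) (by norm_num)
  have h6 := piece_lower (a := -(3/4)) (b := -(1/2)) (m := 9/16) (by norm_num)
    (fun u hu => by obtain ⟨h1, h2⟩ := hu; nlinarith) (by norm_num)
  have h0 : 0 ≤ E0 (-2) := E0_nonneg _
  norm_num at h1 h2 h3 h4 h5 h6 ⊢
  linarith

lemma hP1 : (E0 (3/2) - E0 1) * E0 (-(1/2)) ≤ ∫ v in Set.Iic (-(1/2) : ℝ), F0 v := by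
  have key : ∀ v ∈ Set.Iic (-(1/2):ℝ), g0 v * (E0 (3/2) - E0 1) ≤ F0 v := by
    intro v hv
    unfold F0
    refine mul_le_mul_of_nonneg_left ?_ (g0_pos v).le
    have : (3/2 : ℝ) ≤ 1 - v := by simp only [Set.mem_Iic] at hv; linarith
    have := E0_mono this
    linarith
  have h1 : ∫ v in Set.Iic (-(1/2):ℝ), g0 v * (E0 (3/2) - E0 1)
      ≤ ∫ v in Set.Iic (-(1/2):ℝ), F0 v :=
    setIntegral_mono_on ((intg.mul_const _).integrableOn) F0_int.integrableOn
      measurableSet_Iic key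
  rwa [integral_mul_const, show (∫ v in Set.Iic (-(1/2):ℝ), g0 v) = E0 (-(1/2)) from rfl,
    mul_comm] at h1

lemma hP2 : ((63:ℝ)/64)^8 * ((55:ℝ)/64)^8 / 8 ≤ ∫ v in Set.Ioc (-(1/2) : ℝ) 0, F0 v := by
  set C : ℝ := ((63:ℝ)/64)^8 * ((55:ℝ)/64)^8 with hC
  have hC0 : 0 ≤ C := by positivity
  have key : ∀ v ∈ Set.Ioc (-(1/2):ℝ) 0, C * -v ≤ F0 v := by
    intro v hv
    obtain ⟨hv1, hv2⟩ := hv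
    have hg : ((63:ℝ)/64)^8 ≤ g0 v := by
      have h1 : Real.exp (-(1/8 : ℝ)) ≤ g0 v := by
        unfold g0
        apply Real.exp_le_exp.mpr
        nlinarith
      refine le_trans ?_ h1
      have := le_exp_neg (x := (1/8 : ℝ)) (by norm_num)
      norm_num at this ⊢
      linarith
    have hE : (-v) * ((55:ℝ)/64)^8 ≤ E0 (1 - v) - E0 1 := by
      have := piece_lower (a := 1) (b := 1 - v) (m := 9/4) (by linarith)
        (fun u hu => by obtain ⟨h1, h2⟩ := hu; nlinarith) (by norm_num)
      norm_num at this
      linarith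
    unfold F0
    calc C * -v = ((63:ℝ)/64)^8 * ((-v) * ((55:ℝ)/64)^8) := by rw [hC]; ring
      _ ≤ g0 v * (E0 (1 - v) - E0 1) := by
          refine mul_le_mul hg hE (by nlinarith) (g0_pos v).le
  have h1 : ∫ v in Set.Ioc (-(1/2):ℝ) 0, C * -v ≤ ∫ v in Set.Ioc (-(1/2):ℝ) 0, F0 v :=
    setIntegral_mono_on ((by continuity : Continuous fun v : ℝ => C * -v).integrableOn_Ioc)
      F0_int.integrableOn measurableSet_Ioc key
  have h2 : ∫ v in Set.Ioc (-(1/2):ℝ) 0, C * -v = C / 8 := by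
    rw [← intervalIntegral.integral_of_le (by norm_num : (-(1/2):ℝ) ≤ 0),
      intervalIntegral.integral_const_mul, intervalIntegral.integral_neg, integral_id]
    norm_num
  linarith


lemma neg_part {a b c : ℝ} (hab : a ≤ b) (hc : 0 ≤ c) (h0 : 0 ≤ a) (hb1 : b ≤ 1)
    (h : ∀ v ∈ Set.Ioc a b, E0 1 - E0 (1 - v) ≤ v * c) :
    -(c * (b ^ 2 - a ^ 2) / 2) ≤ ∫ v in Set.Ioc a b, F0 v := by
  have key : ∀ v ∈ Set.Ioc a b, -(c * v) ≤ F0 v := by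
    intro v hv
    obtain ⟨hv1, hv2⟩ := hv
    have hd : E0 (1 - v) ≤ E0 1 := E0_mono (by linarith)
    have h2 : -F0 v ≤ E0 1 - E0 (1 - v) := by
      unfold F0
      nlinarith [g0_le_one v, g0_pos v]
    have h3 := h v ⟨hv1, hv2⟩
    nlinarith
  have h1 : ∫ v in Set.Ioc a b, -(c * v) ≤ ∫ v in Set.Ioc a b, F0 v :=
    setIntegral_mono_on ((by continuity : Continuous fun v : ℝ => -(c * v)).integrableOn_Ioc)
      F0_int.integrableOn measurableSet_Ioc key
  have h2 : ∫ v in Set.Ioc a b, -(c * v) = -(c * (b ^ 2 - a ^ 2) / 2) := by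
    rw [← intervalIntegral.integral_of_le hab, intervalIntegral.integral_neg,
      intervalIntegral.integral_const_mul, integral_id]
    ring
  linarith

lemma hN : -(((256:ℝ)/265)^8/32 + ((64:ℝ)/65)^8*3/32) ≤ ∫ v in Set.Ioc (0:ℝ) (1/2), F0 v := by
  have split : Set.Ioc (0:ℝ) (1/2) = Set.Ioc 0 (1/4) ∪ Set.Ioc (1/4) (1/2) :=
    (Set.Ioc_union_Ioc_eq_Ioc (by norm_num) (by norm_num)).symm
  rw [split, setIntegral_union (Set.Ioc_disjoint_Ioc_of_le le_rfl) measurableSet_Ioc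
    F0_int.integrableOn F0_int.integrableOn]
  have hkey1 : ∀ v ∈ Set.Ioc (0:ℝ) (1/4), E0 1 - E0 (1 - v) ≤ v * ((256:ℝ)/265)^8 := by
    intro v hv
    obtain ⟨hv1, hv2⟩ := hv
    have := piece_upper (a := 1 - v) (b := 1) (m := 9/16) (by linarith)
      (fun u hu => by obtain ⟨h1, h2⟩ := hu; nlinarith) (by norm_num)
    norm_num at this ⊢
    linarith
  have hkey2 : ∀ v ∈ Set.Ioc (1/4:ℝ) (1/2), E0 1 - E0 (1 - v) ≤ v * ((64:ℝ)/65)^8 := by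
    intro v hv
    obtain ⟨hv1, hv2⟩ := hv
    have := piece_upper (a := 1 - v) (b := 1) (m := 1/4) (by linarith)
      (fun u hu => by obtain ⟨h1, h2⟩ := hu; nlinarith) (by norm_num)
    norm_num at this ⊢
    linarith
  have h1 := neg_part (a := 0) (b := 1/4) (c := ((256:ℝ)/265)^8) (by norm_num)
    (by positivity) le_rfl (by norm_num) hkey1
  have h2 := neg_part (a := 1/4) (b := 1/2) (c := ((64:ℝ)/65)^8) (by norm_num)
    (by positivity) (by norm_num) (by norm_num) hkey2
  norm_num at h1 h2 ⊢
  linarith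

lemma core_pos : 0 < ∫ v in Set.Iic (1/2 : ℝ), F0 v := by
  have split1 : Set.Iic (1/2:ℝ) = Set.Iic 0 ∪ Set.Ioc 0 (1/2) :=
    (Set.Iic_union_Ioc_eq_Iic (by norm_num)).symm
  have split2 : Set.Iic (0:ℝ) = Set.Iic (-(1/2)) ∪ Set.Ioc (-(1/2)) 0 :=
    (Set.Iic_union_Ioc_eq_Iic (by norm_num)).symm
  rw [split1, setIntegral_union (Set.Iic_disjoint_Ioc le_rfl) measurableSet_Ioc
    F0_int.integrableOn F0_int.integrableOn, split2,
    setIntegral_union (Set.Iic_disjoint_Ioc le_rfl) measurableSet_Ioc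
    F0_int.integrableOn F0_int.integrableOn]
  have hEa' := hEa
  have hEb' := hEb
  have hEa0 : (0:ℝ) ≤ E0 (3/2) - E0 1 := le_trans (by positivity) hEa'
  have hprod : (1/4 : ℝ)*((231/256)^8+(55/64)^8) *
      ((1/4 : ℝ)*((3/4)^8+(207/256)^8+(55/64)^8+(231/256)^8+(15/16)^8+(247/256)^8))
      ≤ (E0 (3/2) - E0 1) * E0 (-(1/2)) :=
    mul_le_mul hEa' hEb' (by positivity) hEa0
  have h1 := hP1
  have h2 := hP2
  have h3 := hN
  have hnum : (0:ℝ) < (1/4 : ℝ)*((231/256)^8+(55/64)^8) *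
      ((1/4 : ℝ)*((3/4)^8+(207/256)^8+(55/64)^8+(231/256)^8+(15/16)^8+(247/256)^8))
      + ((63:ℝ)/64)^8 * ((55:ℝ)/64)^8 / 8
      - (((256:ℝ)/265)^8/32 + ((64:ℝ)/65)^8*3/32) := by norm_num
  linarith

lemma scale_shift (v : ℝ) :
    ∫ x in Set.Iic (1/2 : ℝ), g0 (2*x - v) = (1/2) * E0 (1 - v) := by
  set h : ℝ → ℝ := Set.indicator (Set.Iic (1 - v)) g0 with hh
  have step1 : ∫ x in Set.Iic (1/2:ℝ), g0 (2*x - v) = ∫ x : ℝ, h (2*x - v) := by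
    rw [← integral_indicator measurableSet_Iic]
    congr 1
    funext x
    by_cases hx : x ≤ 1/2
    · rw [Set.indicator_of_mem (Set.mem_Iic.mpr hx), hh,
        Set.indicator_of_mem (Set.mem_Iic.mpr (by linarith))]
    · rw [Set.indicator_of_notMem (by simpa using hx), hh,
        Set.indicator_of_notMem (fun hmem => hx (by
          simp only [Set.mem_Iic] at hmem; linarith))]
  have step2 : ∫ x : ℝ, h (2*x - v) = ∫ x : ℝ, h (2*x) := by
    have h2 := integral_add_right_eq_self (μ := volume) (fun x : ℝ => h (2*x)) (-(v/2))
    rw [← h2]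
    congr 1
    funext x
    norm_num
    ring_nf
  have step3 : ∫ x : ℝ, h (2*x) = (1/2) * ∫ x, h x := by
    rw [MeasureTheory.Measure.integral_comp_mul_left h 2]
    norm_num
  have step4 : ∫ x : ℝ, h x = E0 (1 - v) := by
    rw [hh, integral_indicator measurableSet_Iic]; rfl
  rw [step1, step2, step3, step4]

lemma inner_eq (v : ℝ) :
    ∫ x in Set.Iic (1/2 : ℝ), Real.exp (-(1 / 2) * ((2 * x - v) ^ 2 + v ^ 2))
      = (1/2) * (g0 v * E0 (1 - v)) := by
  have h1 : ∀ x : ℝ, Real.exp (-(1 / 2) * ((2 * x - v) ^ 2 + v ^ 2))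
      = g0 (2*x - v) * g0 v := by
    intro x; unfold g0; rw [← Real.exp_add]; ring_nf
  simp_rw [h1]
  rw [integral_mul_const, scale_shift]
  ring

lemma E0_zero : E0 0 = Real.sqrt (2 * Real.pi) / 2 := by
  have h1 : E0 0 = ∫ x in Set.Iic (0:ℝ), g0 (-x) := by
    unfold E0; congr 1; funext x; unfold g0; ring_nf
  rw [h1, integral_comp_neg_Iic, neg_zero]
  have h2 : ∀ x : ℝ, g0 x = Real.exp (-(1/2 : ℝ) * x ^ 2) := fun x => by
    unfold g0; ring_nf
  simp_rw [h2]
  rw [integral_gaussian_Ioi]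
  congr 2
  rw [div_div_eq_mul_div, div_one, mul_comm]

lemma sqrt2pi_pos : (0:ℝ) < Real.sqrt (2 * Real.pi) :=
  Real.sqrt_pos.mpr (by positivity)

lemma phi_eq (ζ : ℝ) : 1 + phi 1 ζ = 2 / Real.sqrt (2 * Real.pi) * E0 (ζ / 2) := by
  unfold phi
  have h1 : ∫ t in (0:ℝ)..(ζ / (2 * 1)), Real.exp (-(t ^ 2) / 2)
      = E0 (ζ / 2) - E0 0 := by
    rw [show ζ / (2 * 1) = ζ / 2 by ring]
    unfold E0
    rw [intervalIntegral.integral_Iic_sub_Iic intg.integrableOn intg.integrableOn]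
    rfl
  rw [h1, E0_zero]
  have hs := sqrt2pi_pos
  field_simp
  ring

lemma intg_mul_E0 : Integrable (fun v => g0 v * E0 (1 - v)) := by
  have h : (fun v => g0 v * E0 (1 - v)) = fun v => F0 v + g0 v * E0 1 := by
    funext v; unfold F0; ring
  rw [h]
  exact F0_int.add (intg.mul_const _)


end AuxGauss

/-- Example 1 of the paper: with `σ = 1` and `R = [[2, -1], [0, 1]]`, at a corner parameter
the rounding success probability strictly exceeds the Babai success probability. -/
theorem example_rounding_gt_babai :
    (1 / Real.pi) *
        ∫ ξ₂ in Set.Iic (1 / 2 : ℝ), ∫ ξ₁ in Set.Iic (1 / 2 : ℝ),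
          Real.exp (-(1 / 2) * ((2 * ξ₁ - ξ₂) ^ 2 + ξ₂ ^ 2))
      > 1 / 4 * (1 + phi 1 1) * (1 + phi 1 2) := by
  open MeasureTheory Set in
  have hπ : (0:ℝ) < Real.pi := Real.pi_pos
  have hLHS : (1 / Real.pi) *
        ∫ ξ₂ in Set.Iic (1 / 2 : ℝ), ∫ ξ₁ in Set.Iic (1 / 2 : ℝ),
          Real.exp (-(1 / 2) * ((2 * ξ₁ - ξ₂) ^ 2 + ξ₂ ^ 2))
      = (1 / (2 * Real.pi)) * ∫ v in Set.Iic (1 / 2 : ℝ), g0 v * E0 (1 - v) := by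
    simp_rw [inner_eq]
    rw [integral_const_mul]
    ring
  have hRHS : 1 / 4 * (1 + phi 1 1) * (1 + phi 1 2)
      = (1 / (2 * Real.pi)) * (E0 (1/2) * E0 1) := by
    rw [phi_eq 1, phi_eq 2]
    have hs := sqrt2pi_pos
    have hsq : Real.sqrt (2 * Real.pi) * Real.sqrt (2 * Real.pi) = 2 * Real.pi :=
      Real.mul_self_sqrt (by positivity)
    rw [show (2:ℝ)/2 = 1 by norm_num]
    set s := Real.sqrt (2 * Real.pi)
    set A := E0 (1/2)
    set B := E0 1
    have key : 1/4 * (2/s*A) * (2/s*B) = A*B*(s*s)⁻¹ := by ring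
    rw [key, hsq]
    ring
  rw [hLHS, hRHS]
  have hsub : (∫ v in Set.Iic (1/2:ℝ), g0 v * E0 (1 - v))
      - ∫ v in Set.Iic (1/2:ℝ), g0 v * E0 1 = ∫ v in Set.Iic (1/2:ℝ), F0 v := by
    rw [← integral_sub intg_mul_E0.integrableOn (intg.mul_const _).integrableOn]
    congr 1; funext v; unfold F0; ring
  have hconst : ∫ v in Set.Iic (1/2:ℝ), g0 v * E0 1 = E0 (1/2) * E0 1 := by
    rw [integral_mul_const]; rfl
  have hcore := core_pos
  have : E0 (1/2) * E0 1 < ∫ v in Set.Iic (1/2:ℝ), g0 v * E0 (1 - v) := by linarith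
  have hpos : (0:ℝ) < 1 / (2 * Real.pi) := by positivity
  exact mul_lt_mul_of_pos_left this hpos
end
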